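/- Let m ≥ 2 and let q be a positive integer. Then the number χ_{B_m}(q) of points z ∈ (ℤ/qℤ)^m satisfying z_i ≠ 0 for all 1 ≤ i ≤ m, and z_i − z_j ≠ 0 and z_i + z_j ≠ 0 for all 1 ≤ i < j ≤ m, equals (q−1)(q−3)⋯(q−2m+1) if q is odd, and equals (q−2)(q−4)⋯(q−2m+2)·(q−m) if q is even. -/

import Mathlib

open Finset

set_option linter.unusedSectionVars false

namespace Stmt11

variable {q : ℕ} [NeZero q]

def Pred (S : Finset (ZMod q)) {m : ℕ} (z : Fin m → ZMod q) : Prop :=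
  (∀ i, z i ∈ S) ∧ ∀ i j, i ≠ j → z i ≠ z j ∧ z i ≠ -z j

lemma forb (S : Finset (ZMod q)) (hS1 : ∀ x ∈ S, -x ∈ S) (hS2 : ∀ x ∈ S, x ≠ -x)
    {m : ℕ} {z : Fin m → ZMod q} (hz : Pred S z) :
    (Finset.image z univ ∪ Finset.image (fun i => -z i) univ) ⊆ S ∧
    (Finset.image z univ ∪ Finset.image (fun i => -z i) univ).card = 2 * m := by
  classical
  have hinj : Function.Injective z := by
    intro i j h
    by_contra hne
    exact (hz.2 i j hne).1 h
  have hinj2 : Function.Injective (fun i => -z i) := fun i j h => hinj (neg_injective h)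
  have hdisj : Disjoint (Finset.image z univ) (Finset.image (fun i => -z i) univ) := by
    rw [Finset.disjoint_left]
    rintro a ha hb
    simp only [Finset.mem_image, Finset.mem_univ, true_and] at ha hb
    obtain ⟨i, rfl⟩ := ha
    obtain ⟨j, hj⟩ := hb
    rcases eq_or_ne i j with rfl | hne
    · exact hS2 (z i) (hz.1 i) hj.symm
    · exact (hz.2 i j hne).2 hj.symm
  constructor
  · intro a ha
    rcases Finset.mem_union.1 ha with h | h <;>
      simp only [Finset.mem_image, Finset.mem_univ, true_and] at h <;>
      obtain ⟨i, rfl⟩ := h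
    · exact hz.1 i
    · exact hS1 _ (hz.1 i)
  · rw [Finset.card_union_of_disjoint hdisj, Finset.card_image_of_injective _ hinj,
      Finset.card_image_of_injective _ hinj2, Finset.card_univ, Fintype.card_fin]
    ring

lemma pred_cons_iff (S : Finset (ZMod q)) {m : ℕ} (a : ZMod q) (z : Fin m → ZMod q) :
    Pred S (Fin.cons a z) ↔ Pred S z ∧ a ∈ S ∧ ∀ i, a ≠ z i ∧ a ≠ -z i := by
  constructor
  · intro h
    refine ⟨⟨fun i => ?_, fun i j hne => ?_⟩, ?_, fun i => ⟨?_, ?_⟩⟩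
    · simpa using h.1 i.succ
    · have := h.2 i.succ j.succ (fun hc => hne (Fin.succ_injective _ hc))
      simpa using this
    · simpa using h.1 0
    · have := (h.2 0 i.succ (Fin.succ_ne_zero i).symm).1
      simpa using this
    · have := (h.2 0 i.succ (Fin.succ_ne_zero i).symm).2
      simpa using this
  · rintro ⟨hz, haS, hext⟩
    constructor
    · intro i
      refine Fin.cases ?_ ?_ i
      · simpa using haS
      · intro i'; simpa using hz.1 i'
    · intro i j
      induction i using Fin.cases with
      | zero =>
        induction j using Fin.cases with
        | zero => intro hne; exact absurd rfl hne
        | succ j' => intro _; simpa using hext j'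
      | succ i' =>
        induction j using Fin.cases with
        | zero =>
          intro _
          refine ⟨?_, ?_⟩
          · simpa using fun hc => (hext i').1 hc.symm
          · simp only [Fin.cons_succ, Fin.cons_zero]
            intro hc
            exact (hext i').2 (by rw [hc, neg_neg])
        | succ j' =>
          intro hne
          have hne' : i' ≠ j' := fun hc => hne (by rw [hc])
          simpa using hz.2 i' j' hne'

lemma core (S : Finset (ZMod q)) (hS1 : ∀ x ∈ S, -x ∈ S) (hS2 : ∀ x ∈ S, x ≠ -x) :
    ∀ m : ℕ, (Nat.card {z : Fin m → ZMod q // Pred S z} : ℤ) =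
      ∏ i ∈ range m, ((S.card : ℤ) - 2 * i) := by
  intro m
  induction m with
  | zero =>
    haveI : Unique {z : Fin 0 → ZMod q // Pred S z} :=
      { default := ⟨finZeroElim, ⟨fun i => i.elim0, fun i => i.elim0⟩⟩
        uniq := fun z => Subtype.ext (funext fun i => i.elim0) }
    simp
  | succ m ih =>
    classical
    -- counts as filter cards
    have hcard : ∀ k : ℕ, Nat.card {z : Fin k → ZMod q // Pred S z} =
        (univ.filter (fun z : Fin k → ZMod q => Pred S z)).card := by
      intro k
      rw [Nat.card_eq_fintype_card, Fintype.card_subtype]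
    -- step via fiberwise counting over tail
    have hstep : (univ.filter (fun z : Fin (m+1) → ZMod q => Pred S z)).card =
        (univ.filter (fun z : Fin m → ZMod q => Pred S z)).card * (S.card - 2 * m) := by
      have hmap : ∀ z ∈ univ.filter (fun z : Fin (m+1) → ZMod q => Pred S z),
          Fin.tail z ∈ univ.filter (fun z : Fin m → ZMod q => Pred S z) := by
        intro z hz
        simp only [Finset.mem_filter, Finset.mem_univ, true_and] at hz ⊢
        exact ((pred_cons_iff S (z 0) (Fin.tail z)).1
          (by rw [Fin.cons_self_tail]; exact hz)).1
      rw [Finset.card_eq_sum_card_fiberwise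
        (f := (Fin.tail : (Fin (m+1) → ZMod q) → (Fin m → ZMod q)))
        (t := univ.filter (fun z : Fin m → ZMod q => Pred S z)) (fun z hz => hmap z hz)]
      have hfib : ∀ z' ∈ univ.filter (fun z : Fin m → ZMod q => Pred S z),
          ((univ.filter (fun z : Fin (m+1) → ZMod q => Pred S z)).filter
            (fun z => Fin.tail z = z')).card = S.card - 2 * m := by
        intro z' hz'
        simp only [Finset.mem_filter, Finset.mem_univ, true_and] at hz'
        rw [Finset.filter_filter]
        -- fiber ≃ S \ forbidden
        have hbij : (univ.filter (fun z : Fin (m+1) → ZMod q => Pred S z ∧ Fin.tail z = z')).card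
            = (S \ (Finset.image z' univ ∪ Finset.image (fun i => -z' i) univ)).card := by
          refine Finset.card_bij' (fun z _ => z 0)
            (fun a _ => Fin.cons a z') ?_ ?_ ?_ ?_
          · intro z hzmem
            simp only [Finset.mem_filter, Finset.mem_univ, true_and] at hzmem
            obtain ⟨hP, htail⟩ := hzmem
            have hP' : Pred S (Fin.cons (z 0) z') := by
              rw [← htail, Fin.cons_self_tail]; exact hP
            rw [pred_cons_iff] at hP'
            simp only [Finset.mem_sdiff, Finset.mem_union, Finset.mem_image,
              Finset.mem_univ, true_and, not_or, not_exists]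
            exact ⟨hP'.2.1, fun i hc => (hP'.2.2 i).1 hc.symm,
              fun i hc => (hP'.2.2 i).2 hc.symm⟩
          · intro a ha
            simp only [Finset.mem_sdiff, Finset.mem_union, Finset.mem_image,
              Finset.mem_univ, true_and, not_or, not_exists] at ha
            simp only [Finset.mem_filter, Finset.mem_univ, true_and]
            refine ⟨(pred_cons_iff S a z').2 ⟨hz', ha.1, fun i =>
              ⟨fun hc => ha.2.1 i hc.symm, fun hc => ha.2.2 i hc.symm⟩⟩, ?_⟩
            simp
          · intro z hzm
            simp only [Finset.mem_filter, Finset.mem_univ, true_and] at hzm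
            obtain ⟨hP, htail⟩ := hzm
            subst htail
            exact Fin.cons_self_tail z
          · intro a ha
            simp
        rw [hbij, Finset.card_sdiff_of_subset (forb S hS1 hS2 hz').1, (forb S hS1 hS2 hz').2]
      rw [Finset.sum_congr rfl hfib, Finset.sum_const, smul_eq_mul]
    rw [hcard] at ih ⊢
    rw [Finset.prod_range_succ, ← ih, hstep]
    rcases Nat.eq_zero_or_pos (univ.filter (fun z : Fin m → ZMod q => Pred S z)).card with h0 | hpos
    · simp [h0]
    · obtain ⟨z, hz⟩ := Finset.card_pos.1 hpos
      simp only [Finset.mem_filter, Finset.mem_univ, true_and] at hz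
      have hle : 2 * m ≤ S.card := by
        have := forb S hS1 hS2 hz
        calc 2 * m = _ := this.2.symm
        _ ≤ S.card := Finset.card_le_card this.1
      push_cast [Nat.cast_sub hle]
      ring



lemma count_eq {α : Type*} [Fintype α] (p : α → Prop) [DecidablePred p] :
    (univ.filter p).card = Nat.card {x // p x} := by
  rw [Nat.card_eq_fintype_card, Fintype.card_subtype]

lemma odd_ne_neg (hpar : q % 2 = 1) {x : ZMod q} (hx : x ≠ 0) : x ≠ -x := by
  intro h
  apply hx
  have hxx : (2 : ZMod q) * x = 0 := by
    rw [two_mul]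
    nth_rewrite 2 [h]
    simp
  have hu : IsUnit (2 : ZMod q) := by
    have h2 : IsUnit ((2 : ℕ) : ZMod q) := by
      rw [ZMod.isUnit_iff_coprime]
      rw [Nat.Prime.coprime_iff_not_dvd Nat.prime_two]
      omega
    simpa using h2
  exact (IsUnit.mul_right_eq_zero hu).1 hxx

end Stmt11

open Stmt11

/-- The value of the characteristic quasi-polynomial of the root system `B_m`:
for a positive integer `q`, the number of `z ∈ (ℤ/qℤ)^m` with `z i ≠ 0` for all `i`
and `z i ≠ z j`, `z i + z j ≠ 0` for all `i < j` equals
`(q−1)(q−3)⋯(q−2m+1)` if `q` is odd and `(q−2)(q−4)⋯(q−2m+2)(q−m)` if `q` is even. -/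
theorem stmt_11 (m : ℕ) (hm : 2 ≤ m) (q : ℕ) (hq : 0 < q) :
    (Nat.card {z : Fin m → ZMod q //
        (∀ i, z i ≠ 0) ∧ ∀ i j : Fin m, i < j → z i ≠ z j ∧ z i + z j ≠ 0} : ℤ) =
      if q % 2 = 1 then
        ∏ i ∈ Finset.range m, ((q : ℤ) - (2 * i + 1))
      else
        (∏ i ∈ Finset.range (m - 1), ((q : ℤ) - 2 * (i + 1))) * ((q : ℤ) - m) := by
  haveI : NeZero q := ⟨hq.ne'⟩
  classical
  have hiff : ∀ z : Fin m → ZMod q,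
      ((∀ i, z i ≠ 0) ∧ ∀ i j : Fin m, i < j → z i ≠ z j ∧ z i + z j ≠ 0) ↔
      ((∀ i, z i ≠ 0) ∧ ∀ i j : Fin m, i ≠ j → z i ≠ z j ∧ z i ≠ -z j) := by
    intro z
    constructor
    · rintro ⟨h0, h⟩
      refine ⟨h0, fun i j hne => ?_⟩
      rcases lt_or_gt_of_ne hne with hlt | hgt
      · exact ⟨(h i j hlt).1, fun hc => (h i j hlt).2 (by rw [hc]; ring)⟩
      · exact ⟨fun hc => (h j i hgt).1 hc.symm,
          fun hc => (h j i hgt).2 (by rw [hc]; ring)⟩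
    · rintro ⟨h0, h⟩
      exact ⟨h0, fun i j hlt => ⟨(h i j hlt.ne).1,
        fun hc => (h i j hlt.ne).2 (eq_neg_of_add_eq_zero_left hc)⟩⟩
  rw [Nat.card_congr (Equiv.subtypeEquivRight hiff)]
  by_cases hpar : q % 2 = 1
  · rw [if_pos hpar]
    set S₀ : Finset (ZMod q) := univ \ {0} with hS₀
    have hmem : ∀ x : ZMod q, x ∈ S₀ ↔ x ≠ 0 := by intro x; simp [hS₀]
    have hS1 : ∀ x ∈ S₀, -x ∈ S₀ := by
      intro x hx
      rw [hmem] at hx ⊢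
      simpa using hx
    have hS2 : ∀ x ∈ S₀, x ≠ -x := fun x hx => odd_ne_neg hpar ((hmem x).1 hx)
    have hP : ∀ z : Fin m → ZMod q,
        ((∀ i, z i ≠ 0) ∧ ∀ i j : Fin m, i ≠ j → z i ≠ z j ∧ z i ≠ -z j) ↔ Pred S₀ z :=
      fun z => and_congr (forall_congr' fun i => (hmem _).symm) Iff.rfl
    rw [Nat.card_congr (Equiv.subtypeEquivRight hP), core S₀ hS1 hS2 m]
    have hcardS : S₀.card = q - 1 := by
      rw [hS₀, Finset.card_sdiff_of_subset (Finset.subset_univ _), Finset.card_univ, ZMod.card,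
        Finset.card_singleton]
    rw [hcardS]
    refine Finset.prod_congr rfl fun i _ => ?_
    have h1 : ((q - 1 : ℕ) : ℤ) = (q : ℤ) - 1 := by
      push_cast [Nat.cast_sub (by omega : 1 ≤ q)]
      ring
    rw [h1]; ring
  · rw [if_neg hpar]
    have hq2 : 2 ∣ q := by omega
    have hq2' : 2 ≤ q := by omega
    obtain ⟨n, rfl⟩ : ∃ n, m = n + 2 := ⟨m - 2, by omega⟩
    set c : ZMod q := ((q / 2 : ℕ) : ZMod q) with hc
    have hc0 : c ≠ 0 := by
      rw [hc, Ne, ZMod.natCast_eq_zero_iff]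
      intro hdvd
      have := Nat.le_of_dvd (by omega) hdvd
      omega
    have hcc : c + c = 0 := by
      rw [hc, ← Nat.cast_add]
      have hhalf : q / 2 + q / 2 = q := by omega
      rw [hhalf, ZMod.natCast_self]
    have hnegc : -c = c := by
      rw [neg_eq_iff_add_eq_zero]
      exact hcc
    have h2x : ∀ x : ZMod q, x + x = 0 → x = 0 ∨ x = c := by
      intro x hx
      have hxv : ((x.val : ℕ) : ZMod q) = x := ZMod.natCast_rightInverse x
      have hzero : ((x.val + x.val : ℕ) : ZMod q) = 0 := by
        rw [Nat.cast_add, hxv]; exact hx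
      rw [ZMod.natCast_eq_zero_iff] at hzero
      have hvlt : x.val < q := ZMod.val_lt x
      obtain ⟨k, hk⟩ := hzero
      have hk2 : k = 0 ∨ k = 1 := by
        rcases Nat.lt_or_ge k 2 with h | h
        · omega
        · exfalso
          have : q * 2 ≤ q * k := Nat.mul_le_mul_left q h
          omega
      rcases hk2 with rfl | rfl
      · left
        have : x.val = 0 := by omega
        rw [← hxv, this]; simp
      · right
        have : x.val = q / 2 := by omega
        rw [← hxv, this, hc]
    set S' : Finset (ZMod q) := univ \ {0, c} with hS'
    have hmem : ∀ x : ZMod q, x ∈ S' ↔ x ≠ 0 ∧ x ≠ c := by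
      intro x; simp [hS', not_or]
    have hS1 : ∀ x ∈ S', -x ∈ S' := by
      intro x hx
      rw [hmem] at hx ⊢
      refine ⟨by simpa using hx.1, fun hcx => hx.2 ?_⟩
      have hx2 : x = -c := neg_eq_iff_eq_neg.1 hcx
      rw [hx2, hnegc]
    have hS2 : ∀ x ∈ S', x ≠ -x := by
      intro x hx h
      rw [hmem] at hx
      have hxx : x + x = 0 := by
        nth_rewrite 2 [h]
        simp
      rcases h2x x hxx with h0 | hc1
      exacts [hx.1 h0, hx.2 hc1]
    have hcardS : S'.card = q - 2 := by
      rw [hS', Finset.card_sdiff_of_subset (Finset.subset_univ _), Finset.card_univ, ZMod.card,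
        Finset.card_pair (fun h => hc0 h.symm)]
    set ok : (Fin (n+2) → ZMod q) → Prop :=
      fun z => (∀ i, z i ≠ 0) ∧ ∀ i j : Fin (n+2), i ≠ j → z i ≠ z j ∧ z i ≠ -z j with hok
    rw [← count_eq]
    have hsplit : (univ.filter ok).card =
        (univ.filter (fun z => ok z ∧ ∀ i, z i ≠ c)).card +
        (univ.filter (fun z => ok z ∧ ¬ ∀ i, z i ≠ c)).card := by
      have h := Finset.card_filter_add_card_filter_not
        (s := univ.filter ok) (p := fun z => ∀ i, z i ≠ c)
      rw [Finset.filter_filter, Finset.filter_filter] at h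
      exact h.symm
    -- part 1
    have hpart1 : univ.filter (fun z => ok z ∧ ∀ i, z i ≠ c) =
        univ.filter (fun z : Fin (n+2) → ZMod q => Pred S' z) := by
      refine Finset.filter_congr fun z _ => ?_
      constructor
      · rintro ⟨⟨h0, hpair⟩, hcz⟩
        exact ⟨fun i => (hmem _).2 ⟨h0 i, hcz i⟩, hpair⟩
      · rintro ⟨hm', hpair⟩
        exact ⟨⟨fun i => ((hmem _).1 (hm' i)).1, hpair⟩, fun i => ((hmem _).1 (hm' i)).2⟩
    -- part 2
    have hpart2 : univ.filter (fun z => ok z ∧ ¬ ∀ i, z i ≠ c) =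
        univ.biUnion (fun k : Fin (n+2) =>
          univ.filter (fun z => ok z ∧ z k = c)) := by
      ext z
      simp only [Finset.mem_filter, Finset.mem_univ, true_and, Finset.mem_biUnion,
        not_forall, not_not, ne_eq]
      tauto
    have hdisj : ∀ k ∈ (univ : Finset (Fin (n+2))), ∀ k' ∈ (univ : Finset (Fin (n+2))),
        k ≠ k' → Disjoint (univ.filter (fun z => ok z ∧ z k = c))
          (univ.filter (fun z => ok z ∧ z k' = c)) := by
      intro k _ k' _ hne
      rw [Finset.disjoint_left]
      intro z hz hz'
      simp only [Finset.mem_filter, Finset.mem_univ, true_and] at hz hz'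
      exact (hz.1.2 k k' hne).1 (by rw [hz.2, hz'.2])
    have hperk : ∀ k : Fin (n+2), (univ.filter (fun z => ok z ∧ z k = c)).card =
        (univ.filter (fun z' : Fin (n+1) → ZMod q => Pred S' z')).card := by
      intro k
      refine Finset.card_bij' (fun z _ => z ∘ k.succAbove) (fun z' _ => k.insertNth c z')
        ?_ ?_ ?_ ?_
      · intro z hz
        simp only [Finset.mem_filter, Finset.mem_univ, true_and] at hz ⊢
        obtain ⟨⟨h0, hpair⟩, hk⟩ := hz
        refine ⟨fun i => ?_, fun i j hne => ?_⟩
        · rw [hmem]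
          exact ⟨h0 _, fun hceq => (hpair _ k (Fin.succAbove_ne k i)).1
            (by rw [Function.comp_apply] at hceq; rw [hceq, hk])⟩
        · have hne' : k.succAbove i ≠ k.succAbove j :=
            fun hcon => hne (Fin.succAbove_right_injective hcon)
          exact hpair _ _ hne'
      · intro z' hz'
        simp only [Finset.mem_filter, Finset.mem_univ, true_and] at hz' ⊢
        obtain ⟨hmem', hpair⟩ := hz'
        refine ⟨⟨?_, ?_⟩, by simp⟩
        · intro i
          rcases eq_or_ne i k with rfl | hne
          · rw [Fin.insertNth_apply_same]; exact hc0
          · obtain ⟨i', rfl⟩ := Fin.exists_succAbove_eq hne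
            rw [Fin.insertNth_apply_succAbove]
            exact ((hmem (z' i')).1 (hmem' i')).1
        · intro i j hne
          rcases eq_or_ne i k with rfl | hnei
          · obtain ⟨j', rfl⟩ := Fin.exists_succAbove_eq (Ne.symm hne)
            rw [Fin.insertNth_apply_same, Fin.insertNth_apply_succAbove]
            have h' := (hmem (z' j')).1 (hmem' j')
            refine ⟨fun hcon => h'.2 hcon.symm, fun hcon => h'.2 ?_⟩
            have : -c = z' j' := by rw [hcon, neg_neg]
            rw [← this, hnegc]
          · obtain ⟨i', rfl⟩ := Fin.exists_succAbove_eq hnei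
            rcases eq_or_ne j k with rfl | hnej
            · rw [Fin.insertNth_apply_same, Fin.insertNth_apply_succAbove]
              have h' := (hmem (z' i')).1 (hmem' i')
              exact ⟨h'.2, by rw [hnegc]; exact h'.2⟩
            · obtain ⟨j', rfl⟩ := Fin.exists_succAbove_eq hnej
              rw [Fin.insertNth_apply_succAbove, Fin.insertNth_apply_succAbove]
              exact hpair i' j' (fun hcon => hne (by rw [hcon]))
      · intro z hz
        simp only [Finset.mem_filter, Finset.mem_univ, true_and] at hz
        funext x
        beta_reduce
        rcases eq_or_ne x k with rfl | hne
        · rw [Fin.insertNth_apply_same]; exact hz.2.symm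
        · obtain ⟨x', rfl⟩ := Fin.exists_succAbove_eq hne
          rw [Fin.insertNth_apply_succAbove]; rfl
      · intro z' hz'
        funext i
        simp
    -- put together
    have h2 : ((q - 2 : ℕ) : ℤ) = (q : ℤ) - 2 := by
      push_cast [Nat.cast_sub hq2']
      ring
    have hV2 : ((univ.filter (fun z : Fin (n+2) → ZMod q => Pred S' z)).card : ℤ) =
        ∏ i ∈ range (n+2), ((q : ℤ) - 2 * (i + 1)) := by
      rw [count_eq, core S' hS1 hS2 (n+2), hcardS]
      refine Finset.prod_congr rfl fun i _ => ?_
      rw [h2]; ring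
    have hV1 : ((univ.filter (fun z : Fin (n+1) → ZMod q => Pred S' z)).card : ℤ) =
        ∏ i ∈ range (n+1), ((q : ℤ) - 2 * (i + 1)) := by
      rw [count_eq, core S' hS1 hS2 (n+1), hcardS]
      refine Finset.prod_congr rfl fun i _ => ?_
      rw [h2]; ring
    have hcount : (univ.filter ok).card =
        (univ.filter (fun z : Fin (n+2) → ZMod q => Pred S' z)).card +
        (n+2) * (univ.filter (fun z' : Fin (n+1) → ZMod q => Pred S' z')).card := by
      rw [hsplit, hpart1, hpart2, Finset.card_biUnion hdisj,
        Finset.sum_congr rfl (fun k _ => hperk k), Finset.sum_const, Finset.card_univ,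
        Fintype.card_fin, smul_eq_mul]
    rw [hcount]
    push_cast
    rw [hV2, hV1, Finset.prod_range_succ]
    push_cast
    ring
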